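/- Let e_1, e_2 be the standard basis vectors of ℝ² and let T = e_1∘e_1∘e_1∘e_1 + e_1∘e_1∘e_2∘e_2 + e_2∘e_2∘e_1∘e_1 + e_2∘e_2∘e_2∘e_2 ∈ ℝ^{2×2×2×2}. Then T is partial-symmetric, its unfolding matrix T_{[1,2;3,4]} has matrix rank one, yet T is not a rank-one tensor, i.e., there exist no vectors a,b,c,d ∈ ℝ² with T = a∘b∘c∘d. -/

import Mathlib

open scoped BigOperators

/-- A fourth-order real tensor is partial-symmetric. -/
def IsPS {n : ℕ} (A : Fin n → Fin n → Fin n → Fin n → ℝ) : Prop :=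
  ∀ i j k l, A i j k l = A j i k l ∧ A i j k l = A i j l k ∧
    A i j k l = A k l i j

/-- The unfolding `T_{[1,2;3,4]}`: the entry in the row indexed by `(i,j)` and
the column indexed by `(k,l)` is `T_{ijkl}`. -/
def unfold1234 {n : ℕ} (T : Fin n → Fin n → Fin n → Fin n → ℝ) :
    Matrix (Fin n × Fin n) (Fin n × Fin n) ℝ :=
  fun p q => T p.1 p.2 q.1 q.2

/-- The standard basis vectors of `ℝ²`. -/
def e2 (a : Fin 2) : Fin 2 → ℝ := fun i => if i = a then 1 else 0

/-- The tensor `T = e₁∘e₁∘e₁∘e₁ + e₁∘e₁∘e₂∘e₂ + e₂∘e₂∘e₁∘e₁ + e₂∘e₂∘e₂∘e₂`. -/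
def Tcounter : Fin 2 → Fin 2 → Fin 2 → Fin 2 → ℝ := fun i j k l =>
  e2 0 i * e2 0 j * e2 0 k * e2 0 l + e2 0 i * e2 0 j * e2 1 k * e2 1 l +
  e2 1 i * e2 1 j * e2 0 k * e2 0 l + e2 1 i * e2 1 j * e2 1 k * e2 1 l

/-- `Tcounter` is partial-symmetric and its unfolding `T_{[1,2;3,4]}` has
rank one, yet `Tcounter` is not a rank-one tensor. -/
theorem unfold1234_rank_one_not_sufficient :
    IsPS Tcounter ∧ (unfold1234 Tcounter).rank = 1 ∧
    ¬ ∃ a b c d : Fin 2 → ℝ, ∀ i j k l,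
      Tcounter i j k l = a i * b j * c k * d l := by
  refine ⟨?_, ?_, ?_⟩
  · intro i j k l
    fin_cases i <;> fin_cases j <;> fin_cases k <;> fin_cases l <;>
      simp [Tcounter, e2]
  · set w : Fin 2 × Fin 2 → ℝ := fun p => if p.1 = p.2 then 1 else 0 with hw
    have hM : unfold1234 Tcounter = Matrix.vecMulVec w w := by
      ext ⟨i, j⟩ ⟨k, l⟩
      fin_cases i <;> fin_cases j <;> fin_cases k <;> fin_cases l <;>
        simp [unfold1234, Tcounter, e2, Matrix.vecMulVec, hw]
    have hle : (unfold1234 Tcounter).rank ≤ 1 := by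
      rw [hM, Matrix.vecMulVec_eq (Fin 1)]
      refine le_trans (Matrix.rank_mul_le_left _ _) ?_
      have := Matrix.rank_le_card_width
        (R := ℝ) (Matrix.replicateCol (Fin 1) w)
      exact le_trans this (by simp)
    have hge : 1 ≤ (unfold1234 Tcounter).rank := by
      rw [Nat.one_le_iff_ne_zero]
      intro h
      have h0 : unfold1234 Tcounter ((0 : Fin 2), (0 : Fin 2))
          ((0 : Fin 2), (0 : Fin 2)) = 1 := by
        simp [unfold1234, Tcounter, e2]
      have hrange : LinearMap.range (unfold1234 Tcounter).mulVecLin = ⊥ := by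
        rw [← Submodule.finrank_eq_zero (R := ℝ)]
        exact h
      have := LinearMap.range_eq_bot.mp hrange
      have hx : (unfold1234 Tcounter).mulVecLin
          (Pi.single ((0 : Fin 2), (0 : Fin 2)) 1) = 0 := by rw [this]; rfl
      have := congrFun hx ((0 : Fin 2), (0 : Fin 2))
      rw [Matrix.mulVecLin_apply, Matrix.mulVec_single] at this
      simp [unfold1234, Tcounter, e2] at this
    omega
  · rintro ⟨a, b, c, d, h⟩
    have h0000 := h 0 0 0 0
    have h0011 := h 0 0 1 1
    have h0001 := h 0 0 0 1
    simp [Tcounter, e2] at h0000 h0011 h0001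
    -- a0*b0*c0*d0 = 1, a0*b0*c1*d1 = 1, a0*b0*c0*d1 = 0
    rcases h0001 with ((h' | h') | h') | h' <;> simp [h'] at h0000 h0011
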